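/- Let B be a left brace with B³ = 0. Then for all integers m, n and all a, c ∈ B: (m·a) ∗ (n·c) = nm·(a ∗ c) − (nm(m−1)/2)·((a ∗ a) ∗ c), where m·a, n·c denote additive multiples. -/

import Mathlib

/-- A left brace: an abelian group `(B,+)` and a group `(B,·)` on the same set,
with common identity (`0 = 1`), satisfying `a·(b+c) = a·b − a + a·c`. -/
class LeftBrace (B : Type*) extends AddCommGroup B, Group B where
  zero_eq_one : (0 : B) = 1
  brace_distrib : ∀ a b c : B, a * (b + c) = a * b - a + a * c

/-- The star operation `a ∗ b = a·b − a − b`. -/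
def bstar {B : Type*} [LeftBrace B] (a b : B) : B := a * b - a - b

namespace LBaux
variable {B : Type*} [LeftBrace B]

lemma bstar_add (a b c : B) : bstar a (b + c) = bstar a b + bstar a c := by
  simp only [bstar]; rw [LeftBrace.brace_distrib]; abel

lemma mul_zero' (a : B) : a * (0:B) = a := by rw [LeftBrace.zero_eq_one]; exact mul_one a
lemma zero_mul' (a : B) : (0:B) * a = a := by rw [LeftBrace.zero_eq_one]; exact one_mul a

lemma bstar_zero (a : B) : bstar a 0 = 0 := by
  simp only [bstar]; rw [mul_zero']; abel

lemma zero_bstar (a : B) : bstar 0 a = 0 := by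
  simp only [bstar]; rw [zero_mul']; abel

def bstarHom (a : B) : B →+ B :=
  { toFun := bstar a, map_zero' := bstar_zero a, map_add' := bstar_add a }

lemma bstar_zsmul (a : B) (n : ℤ) (c : B) : bstar a (n • c) = n • bstar a c :=
  map_zsmul (bstarHom a) n c

lemma bstar_neg (a c : B) : bstar a (-c) = -bstar a c := map_neg (bstarHom a) c

lemma bstar_mul (u v c : B) :
    bstar (u*v) c = bstar u (bstar v c) + bstar u c + bstar v c := by
  have hsub : ∀ x y : B, bstar u (x - y) = bstar u x - bstar u y := map_sub (bstarHom u)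
  have h1 : bstar u (bstar v c) = bstar u (v * c) - bstar u v - bstar u c := by
    show bstar u (v * c - v - c) = _
    rw [hsub, hsub]
  rw [h1]
  show (u*v)*c - (u*v) - c =
    (u*(v*c) - u - (v*c)) - (u*v - u - v) - (u*c - u - c) + (u*c - u - c) + (v*c - v - c)
  rw [mul_assoc]; abel

section B3
variable (hB3 : ∀ a b c : B, bstar a (bstar b c) = 0)
include hB3

lemma hfix (x p q : B) : x * bstar p q = x + bstar p q := by
  have h : x * bstar p q - x - bstar p q = 0 := hB3 x p q
  rw [sub_sub, sub_eq_zero] at h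
  rw [h]

lemma lemA (x p q c : B) : bstar (x + bstar p q) c = bstar x c + bstar (bstar p q) c := by
  rw [← hfix hB3 x p q, bstar_mul, hB3, zero_add]

lemma lemA' (x p q c : B) : bstar (x - bstar p q) c = bstar x c - bstar (bstar p q) c := by
  have h := lemA hB3 (x - bstar p q) p q c
  rw [sub_add_cancel] at h
  exact eq_sub_of_add_eq h.symm

lemma lemA_smul (k : ℤ) (x p q c : B) :
    bstar (x + k • bstar p q) c = bstar x c + k • bstar (bstar p q) c := by
  induction k using Int.induction_on with
  | zero => simp
  | succ i ih =>
      rw [add_zsmul, one_zsmul, ← add_assoc, lemA hB3, ih, add_zsmul, one_zsmul, add_assoc]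
  | pred i ih =>
      rw [sub_zsmul, one_zsmul, ← add_assoc, ← sub_eq_add_neg, lemA' hB3, ih,
        sub_zsmul, one_zsmul]
      abel

lemma lemC (u v c : B) : bstar (u + v) c = bstar u c + bstar v c - bstar (bstar u v) c := by
  have h1 : u * v = (u + v) + bstar u v := by
    show _ = _ + (u*v - u - v); abel
  have h2 := bstar_mul u v c
  rw [h1, lemA hB3 (u+v) u v c, hB3, zero_add] at h2
  exact eq_sub_of_add_eq h2

lemma lemD (p q b c : B) : bstar (bstar (bstar p q) b) c = 0 := by
  have h1 := lemC hB3 (bstar p q) b c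
  have h2 := lemA hB3 b p q c
  rw [add_comm b (bstar p q)] at h2
  rw [h2] at h1
  rw [add_comm (bstar b c) (bstar (bstar p q) c)] at h1
  exact sub_eq_self.mp h1.symm

-- bstar of a pure multiple of a star value
lemma lem_smul_star (k : ℤ) (p q c : B) :
    bstar (k • bstar p q) c = k • bstar (bstar p q) c := by
  have h := lemA_smul hB3 k 0 p q c
  rwa [zero_add, zero_bstar, zero_add] at h

lemma lem_neg_fst (a c : B) : bstar (-a) c = -bstar a c - bstar (bstar a a) c := by
  have h1 := lemC hB3 a (-a) c
  rw [add_neg_cancel, zero_bstar, bstar_neg] at h1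
  have h3 : bstar (-(bstar a a)) c = - bstar (bstar a a) c := by
    have h := lemA' hB3 0 a a c
    rwa [zero_sub, zero_bstar, zero_sub] at h
  rw [h3] at h1
  -- h1 : 0 = bstar a c + bstar (-a) c - -(bstar (bstar a a) c)
  have h4 : bstar (-a) c - (-bstar a c - bstar (bstar a a) c)
      = (bstar a c + bstar (-a) c - -(bstar (bstar a a) c)) - 0 := by abel
  rw [← h1, sub_self] at h4
  exact sub_eq_zero.mp h4

end B3
end LBaux

-- coefficient lemmas
namespace LBints
lemma hdvd (m : ℤ) : 2 ∣ m * (m - 1) := by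
  obtain ⟨r, hr⟩ := Int.even_mul_succ_self (m - 1)
  exact ⟨r, by linear_combination hr⟩

lemma hk1 (i : ℤ) : (i+1)*((i+1)-1)/2 = i*(i-1)/2 + i := by
  obtain ⟨r, hr⟩ := hdvd i
  have h2 : (i+1)*((i+1)-1) = 2*(r+i) := by linear_combination hr
  rw [hr, h2, Int.mul_ediv_cancel_left _ two_ne_zero, Int.mul_ediv_cancel_left _ two_ne_zero]

lemma hk2 (t : ℤ) : (t-1)*((t-1)-1)/2 = t*(t-1)/2 - t + 1 := by
  obtain ⟨r, hr⟩ := hdvd t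
  have h2 : (t-1)*((t-1)-1) = 2*(r - t + 1) := by linear_combination hr
  rw [hr, h2, Int.mul_ediv_cancel_left _ two_ne_zero, Int.mul_ediv_cancel_left _ two_ne_zero]

lemma hk3 (n m : ℤ) : n * m * (m - 1) / 2 = n * (m * (m-1) / 2) := by
  rw [mul_assoc]
  exact Int.mul_ediv_assoc n (hdvd m)
end LBints


open LBaux LBints in
theorem stmt11 {B : Type*} [LeftBrace B]
    (hB3 : ∀ a b c : B, bstar a (bstar b c) = 0) (m n : ℤ) (a c : B) :
    bstar (m • a) (n • c)
      = (n * m) • bstar a c - ((n * m * (m - 1)) / 2) • bstar (bstar a a) c := by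
  have main : ∀ m : ℤ, ∀ c : B,
      bstar (m • a) c = m • bstar a c - (m*(m-1)/2) • bstar (bstar a a) c := by
    intro m
    induction m using Int.induction_on with
    | zero => intro c; norm_num [zero_bstar]
    | succ i ih =>
        intro c
        have key : bstar (bstar ((i:ℤ) • a) a) c = (i:ℤ) • bstar (bstar a a) c := by
          rw [ih a, sub_eq_add_neg, ← neg_zsmul,
            lemA_smul hB3 (-((i:ℤ)*((i:ℤ)-1)/2)) ((i:ℤ) • bstar a a) (bstar a a) a c,
            lemD hB3, smul_zero, add_zero, lem_smul_star hB3]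
        rw [add_zsmul, one_zsmul, lemC hB3, key, ih c, hk1 (i:ℤ),
          add_zsmul, add_zsmul, one_zsmul]
        abel
    | pred i ih =>
        intro c
        have key : bstar (-(bstar ((-i:ℤ) • a) a)) c = (i:ℤ) • bstar (bstar a a) c := by
          rw [ih a]
          have e : -((-i:ℤ) • bstar a a - ((-i:ℤ)*((-i:ℤ)-1)/2) • bstar (bstar a a) a)
              = (i:ℤ) • bstar a a + ((-i:ℤ)*((-i:ℤ)-1)/2) • bstar (bstar a a) a := by
            rw [neg_zsmul]; abel
          rw [e, lemA_smul hB3 _ _ (bstar a a) a c, lemD hB3, smul_zero, add_zero,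
            lem_smul_star hB3]
        have hstep := lemC hB3 ((-i:ℤ) • a) (-a) c
        have e2 : (-i:ℤ) • a + (-a) = ((-i:ℤ)-1) • a := by
          rw [sub_zsmul, one_zsmul]
        rw [e2, lem_neg_fst hB3, ih c] at hstep
        rw [show bstar ((-i:ℤ) • a) (-a) = -(bstar ((-i:ℤ) • a) a) from bstar_neg _ _,
          key] at hstep
        rw [hstep, hk2 (-i:ℤ), sub_zsmul, one_zsmul, add_zsmul, sub_zsmul, one_zsmul]
        simp only [neg_zsmul]
        abel
  rw [bstar_zsmul, main m c, smul_sub, ← mul_zsmul, hk3, ← mul_zsmul]
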